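/- The graph on 7 vertices consisting of a 6-cycle together with one central vertex adjacent to all six cycle vertices (the wheel W6) is not a circle graph, i.e., it is not realizable as the interlacement graph of any chord diagram. -/

import Mathlib

/-- The point `j` lies strictly inside the arc running positively from `i`
to `σ i` on the circle `ZMod m` of endpoints of a chord diagram with chord
involution `σ`. -/
def InsideArc (m : ℕ) (σ : ZMod m → ZMod m) (i j : ZMod m) : Prop :=
  j ≠ i ∧ (j - i).val < (σ i - i).val

/-- Two chords (through the points `i` and `j`) are linked (interlaced):
exactly one of the endpoints `j`, `σ j` lies inside the arc from `i`
to `σ i`. -/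
def LinkedChords (m : ℕ) (σ : ZMod m → ZMod m) (i j : ZMod m) : Prop :=
  Xor' (InsideArc m σ i j) (InsideArc m σ i (σ j))

/-- Adjacency in the wheel `W₆` on `7` vertices: the hub `0` is adjacent to
all six rim vertices `1, …, 6`, which form a `6`-cycle. -/
def W6Adj (i j : Fin 7) : Prop :=
  i ≠ j ∧ (i = 0 ∨ j = 0 ∨ j.val = i.val % 6 + 1 ∨ i.val = j.val % 6 + 1)

instance W6Adj.dec (i j : Fin 7) : Decidable (W6Adj i j) := by
  unfold W6Adj; infer_instance

set_option maxHeartbeats 4000000 in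
private theorem LD1 : ∀ x y A B : ZMod 14,
    (1 ≤ x.val ∧ x.val ≤ 6 ∧ 1 ≤ y.val ∧ y.val ≤ 6 ∧
     8 ≤ A.val ∧ A.val ≤ 13 ∧ 8 ≤ B.val ∧ B.val ≤ 13 ∧ x ≠ y ∧ A ≠ B) →
    (Xor' (y ≠ x ∧ (y - x).val < (A - x).val) (B ≠ x ∧ (B - x).val < (A - x).val) ↔
      (x.val < y.val ↔ A.val < B.val)) := by unfold Xor'; decide

set_option maxHeartbeats 4000000 in
private theorem LD2 : ∀ x y A B : ZMod 14,
    (1 ≤ x.val ∧ x.val ≤ 6 ∧ 1 ≤ y.val ∧ y.val ≤ 6 ∧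
     8 ≤ A.val ∧ A.val ≤ 13 ∧ 8 ≤ B.val ∧ B.val ≤ 13 ∧ x ≠ y ∧ A ≠ B) →
    (Xor' (y ≠ A ∧ (y - A).val < (x - A).val) (B ≠ A ∧ (B - A).val < (x - A).val) ↔
      (x.val < y.val ↔ A.val < B.val)) := by unfold Xor'; decide

set_option maxHeartbeats 4000000 in
private theorem low6 (t l1 l2 l3 l4 l5 l6 : ℕ)
    (hb : (1 ≤ l1 ∧ l1 < t) ∧ (1 ≤ l2 ∧ l2 < t) ∧ (1 ≤ l3 ∧ l3 < t) ∧ (1 ≤ l4 ∧ l4 < t) ∧ (1 ≤ l5 ∧ l5 < t) ∧ (1 ≤ l6 ∧ l6 < t))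
    (hd : l1 ≠ l2 ∧ l1 ≠ l3 ∧ l1 ≠ l4 ∧ l1 ≠ l5 ∧ l1 ≠ l6 ∧ l2 ≠ l3 ∧ l2 ≠ l4 ∧ l2 ≠ l5 ∧ l2 ≠ l6 ∧ l3 ≠ l4 ∧ l3 ≠ l5 ∧ l3 ≠ l6 ∧ l4 ≠ l5 ∧ l4 ≠ l6 ∧ l5 ≠ l6) : 7 ≤ t := by omega

set_option maxHeartbeats 4000000 in
private theorem high6 (t u1 u2 u3 u4 u5 u6 : ℕ)
    (hb : (t < u1 ∧ u1 ≤ 13) ∧ (t < u2 ∧ u2 ≤ 13) ∧ (t < u3 ∧ u3 ≤ 13) ∧ (t < u4 ∧ u4 ≤ 13) ∧ (t < u5 ∧ u5 ≤ 13) ∧ (t < u6 ∧ u6 ≤ 13))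
    (hd : u1 ≠ u2 ∧ u1 ≠ u3 ∧ u1 ≠ u4 ∧ u1 ≠ u5 ∧ u1 ≠ u6 ∧ u2 ≠ u3 ∧ u2 ≠ u4 ∧ u2 ≠ u5 ∧ u2 ≠ u6 ∧ u3 ≠ u4 ∧ u3 ≠ u5 ∧ u3 ≠ u6 ∧ u4 ≠ u5 ∧ u4 ≠ u6 ∧ u5 ≠ u6) : t ≤ 7 := by omega

set_option maxHeartbeats 4000000 in
private theorem endgame (a1 a2 a3 a4 a5 a6 b1 b2 b3 b4 b5 b6 : ℕ)
    (d12 : a1 ≠ a2) (d13 : a1 ≠ a3) (d14 : a1 ≠ a4) (d15 : a1 ≠ a5) (d16 : a1 ≠ a6) (d23 : a2 ≠ a3) (d24 : a2 ≠ a4) (d25 : a2 ≠ a5) (d26 : a2 ≠ a6) (d34 : a3 ≠ a4) (d35 : a3 ≠ a5) (d36 : a3 ≠ a6) (d45 : a4 ≠ a5) (d46 : a4 ≠ a6) (d56 : a5 ≠ a6)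
    (e12 : b1 ≠ b2) (e13 : b1 ≠ b3) (e14 : b1 ≠ b4) (e15 : b1 ≠ b5) (e16 : b1 ≠ b6) (e23 : b2 ≠ b3) (e24 : b2 ≠ b4) (e25 : b2 ≠ b5) (e26 : b2 ≠ b6) (e34 : b3 ≠ b4) (e35 : b3 ≠ b5) (e36 : b3 ≠ b6) (e45 : b4 ≠ b5) (e46 : b4 ≠ b6) (e56 : b5 ≠ b6)
    (h12 : a1 < a2 ↔ b1 < b2) (h23 : a2 < a3 ↔ b2 < b3) (h34 : a3 < a4 ↔ b3 < b4)
    (h45 : a4 < a5 ↔ b4 < b5) (h56 : a5 < a6 ↔ b5 < b6) (h61 : a6 < a1 ↔ b6 < b1)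
    (n13 : ¬(a1 < a3 ↔ b1 < b3)) (n24 : ¬(a2 < a4 ↔ b2 < b4)) (n35 : ¬(a3 < a5 ↔ b3 < b5))
    (n46 : ¬(a4 < a6 ↔ b4 < b6)) (n51 : ¬(a5 < a1 ↔ b5 < b1)) (n62 : ¬(a6 < a2 ↔ b6 < b2))
    (n14 : ¬(a1 < a4 ↔ b1 < b4)) (n25 : ¬(a2 < a5 ↔ b2 < b5)) (n36 : ¬(a3 < a6 ↔ b3 < b6)) :
    False := by omega


private theorem main_aux (σ : ZMod 14 → ZMod 14) (f : Fin 7 → ZMod 14)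
    (hinv : ∀ k, σ (σ k) = k) (hfp : ∀ k, σ k ≠ k)
    (hd : ∀ i j : Fin 7, i ≠ j → f i ≠ f j ∧ f i ≠ σ (f j))
    (hiff : ∀ i j : Fin 7, i ≠ j → (W6Adj i j ↔ LinkedChords 14 σ (f i) (f j)))
    (h0 : f 0 = 0) : False := by
  have hσinj : Function.Injective σ := fun a b h => by
    rw [← hinv a, h, hinv]
  have hvalinj : ∀ a b : ZMod 14, a.val = b.val → a = b := fun a b h => by
    exact ZMod.val_injective 14 h
  have hval13 : ∀ a : ZMod 14, a.val ≤ 13 := fun a => by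
    have := ZMod.val_lt a; omega
  have hvne0 : ∀ a : ZMod 14, a ≠ 0 → a.val ≠ 0 := fun a ha h =>
    ha (hvalinj a 0 (by simpa using h))
  -- basic endpoint facts for rim chords
  have hfi0 : ∀ i : Fin 7, i ≠ 0 → f i ≠ 0 := fun i hi => by
    rw [← h0]; exact (hd i 0 hi).1
  have hsfi0 : ∀ i : Fin 7, i ≠ 0 → σ (f i) ≠ 0 := fun i hi h => by
    exact (hd 0 i (Ne.symm hi)).2 (by rw [h, h0])
  have hfit : ∀ i : Fin 7, i ≠ 0 → f i ≠ σ 0 := fun i hi => by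
    have := (hd i 0 hi).2; rwa [h0] at this
  have hsfit : ∀ i : Fin 7, i ≠ 0 → σ (f i) ≠ σ 0 := fun i hi h =>
    hfi0 i hi (hσinj h)
  -- each rim chord has exactly one endpoint inside the arc (0, σ 0)
  have hub : ∀ i : Fin 7, i ≠ 0 →
      ((f i).val < (σ 0).val ∧ ¬ (σ (f i)).val < (σ 0).val) ∨
      (¬ (f i).val < (σ 0).val ∧ (σ (f i)).val < (σ 0).val) := by
    intro i hi
    have hW : W6Adj 0 i := ⟨Ne.symm hi, Or.inl rfl⟩
    have L := (hiff 0 i (Ne.symm hi)).mp hW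
    rw [h0] at L
    unfold LinkedChords InsideArc at L
    simp only [sub_zero] at L
    rcases L with ⟨⟨_, ha⟩, hb⟩ | ⟨⟨_, ha⟩, hb⟩
    · exact Or.inl ⟨ha, fun hv => hb ⟨hsfi0 i hi, hv⟩⟩
    · exact Or.inr ⟨fun hv => hb ⟨hfi0 i hi, hv⟩, ha⟩
  -- choose the low endpoint of each rim chord
  have pick : ∀ i : Fin 7, i ≠ 0 → ∃ x : ZMod 14, (x = f i ∨ x = σ (f i)) ∧
      1 ≤ x.val ∧ x.val < (σ 0).val ∧ (σ 0).val < (σ x).val ∧ (σ x).val ≤ 13 := by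
    intro i hi
    have n1 : (f i).val ≠ 0 := hvne0 _ (hfi0 i hi)
    have n2 : (σ (f i)).val ≠ 0 := hvne0 _ (hsfi0 i hi)
    have n3 : (f i).val ≠ (σ 0).val := fun h => hfit i hi (hvalinj _ _ h)
    have n4 : (σ (f i)).val ≠ (σ 0).val := fun h => hsfit i hi (hvalinj _ _ h)
    have b1 := hval13 (f i)
    have b2 := hval13 (σ (f i))
    rcases hub i hi with ⟨ha, hb⟩ | ⟨ha, hb⟩
    · refine ⟨f i, Or.inl rfl, ?_, ?_, ?_, ?_⟩ <;> omega
    · refine ⟨σ (f i), Or.inr rfl, ?_, ?_, ?_, ?_⟩ <;>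
        (try simp only [hinv]) <;> omega
  -- distinctness of selected endpoints of distinct chords
  have xne : ∀ i j : Fin 7, i ≠ j → ∀ x y : ZMod 14,
      (x = f i ∨ x = σ (f i)) → (y = f j ∨ y = σ (f j)) → x ≠ y := by
    intro i j hij x y hx hy
    rcases hx with rfl | rfl <;> rcases hy with rfl | rfl
    · exact (hd i j hij).1
    · exact (hd i j hij).2
    · exact fun h => (hd j i hij.symm).2 h.symm
    · exact fun h => (hd i j hij).1 (hσinj h)
  -- interlacement of two rim chords in terms of endpoint positions
  have pair : ∀ i j : Fin 7, i ≠ j → ∀ x y : ZMod 14,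
      (x = f i ∨ x = σ (f i)) → (y = f j ∨ y = σ (f j)) →
      1 ≤ x.val → x.val ≤ 6 → 1 ≤ y.val → y.val ≤ 6 →
      8 ≤ (σ x).val → (σ x).val ≤ 13 → 8 ≤ (σ y).val → (σ y).val ≤ 13 →
      (W6Adj i j ↔ (x.val < y.val ↔ (σ x).val < (σ y).val)) := by
    intro i j hij x y hx hy c1 c2 c3 c4 c5 c6 c7 c8
    have hxy : x ≠ y := xne i j hij x y hx hy
    have hsxy : σ x ≠ σ y := fun h => hxy (hσinj h)
    rw [hiff i j hij]
    have E : LinkedChords 14 σ (f i) (f j) ↔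
        Xor' (InsideArc 14 σ (f i) y) (InsideArc 14 σ (f i) (σ y)) := by
      rcases hy with h | h
      · rw [h]; exact Iff.rfl
      · rw [h, hinv]
        exact iff_of_eq (xor_comm _ _)
    rw [E]
    rcases hx with h | h
    · rw [← h]
      exact LD1 x y (σ x) (σ y) ⟨c1, c2, c3, c4, c5, c6, c7, c8, hxy, hsxy⟩
    · have hfx : f i = σ x := by rw [h, hinv]
      rw [hfx]
      unfold InsideArc
      rw [hinv x]
      exact LD2 x y (σ x) (σ y) ⟨c1, c2, c3, c4, c5, c6, c7, c8, hxy, hsxy⟩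
  -- instantiate the six rim chords
  obtain ⟨x1, g1, p11, p12, p13, p14⟩ := pick 1 (by decide)
  obtain ⟨x2, g2, p21, p22, p23, p24⟩ := pick 2 (by decide)
  obtain ⟨x3, g3, p31, p32, p33, p34⟩ := pick 3 (by decide)
  obtain ⟨x4, g4, p41, p42, p43, p44⟩ := pick 4 (by decide)
  obtain ⟨x5, g5, p51, p52, p53, p54⟩ := pick 5 (by decide)
  obtain ⟨x6, g6, p61, p62, p63, p64⟩ := pick 6 (by decide)
  -- value distinctness
  have vne : ∀ i j : Fin 7, i ≠ j → ∀ x y : ZMod 14,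
      (x = f i ∨ x = σ (f i)) → (y = f j ∨ y = σ (f j)) → x.val ≠ y.val :=
    fun i j hij x y hx hy h => xne i j hij x y hx hy (hvalinj _ _ h)
  have sne : ∀ i j : Fin 7, i ≠ j → ∀ x y : ZMod 14,
      (x = f i ∨ x = σ (f i)) → (y = f j ∨ y = σ (f j)) → (σ x).val ≠ (σ y).val :=
    fun i j hij x y hx hy h => xne i j hij x y hx hy (hσinj (hvalinj _ _ h))
  have d12 := vne 1 2 (by decide) x1 x2 g1 g2
  have d13 := vne 1 3 (by decide) x1 x3 g1 g3
  have d14 := vne 1 4 (by decide) x1 x4 g1 g4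
  have d15 := vne 1 5 (by decide) x1 x5 g1 g5
  have d16 := vne 1 6 (by decide) x1 x6 g1 g6
  have d23 := vne 2 3 (by decide) x2 x3 g2 g3
  have d24 := vne 2 4 (by decide) x2 x4 g2 g4
  have d25 := vne 2 5 (by decide) x2 x5 g2 g5
  have d26 := vne 2 6 (by decide) x2 x6 g2 g6
  have d34 := vne 3 4 (by decide) x3 x4 g3 g4
  have d35 := vne 3 5 (by decide) x3 x5 g3 g5
  have d36 := vne 3 6 (by decide) x3 x6 g3 g6
  have d45 := vne 4 5 (by decide) x4 x5 g4 g5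
  have d46 := vne 4 6 (by decide) x4 x6 g4 g6
  have d56 := vne 5 6 (by decide) x5 x6 g5 g6
  have e12 := sne 1 2 (by decide) x1 x2 g1 g2
  have e13 := sne 1 3 (by decide) x1 x3 g1 g3
  have e14 := sne 1 4 (by decide) x1 x4 g1 g4
  have e15 := sne 1 5 (by decide) x1 x5 g1 g5
  have e16 := sne 1 6 (by decide) x1 x6 g1 g6
  have e23 := sne 2 3 (by decide) x2 x3 g2 g3
  have e24 := sne 2 4 (by decide) x2 x4 g2 g4
  have e25 := sne 2 5 (by decide) x2 x5 g2 g5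
  have e26 := sne 2 6 (by decide) x2 x6 g2 g6
  have e34 := sne 3 4 (by decide) x3 x4 g3 g4
  have e35 := sne 3 5 (by decide) x3 x5 g3 g5
  have e36 := sne 3 6 (by decide) x3 x6 g3 g6
  have e45 := sne 4 5 (by decide) x4 x5 g4 g5
  have e46 := sne 4 6 (by decide) x4 x6 g4 g6
  have e56 := sne 5 6 (by decide) x5 x6 g5 g6
  -- the hub chord is a diameter: (σ 0).val = 7
  have t7 : (σ 0).val = 7 := by
    have hl := low6 (σ 0).val x1.val x2.val x3.val x4.val x5.val x6.val
      ⟨⟨p11, p12⟩, ⟨p21, p22⟩, ⟨p31, p32⟩, ⟨p41, p42⟩, ⟨p51, p52⟩, ⟨p61, p62⟩⟩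
      ⟨d12, d13, d14, d15, d16, d23, d24, d25, d26, d34, d35, d36, d45, d46, d56⟩
    have hh := high6 (σ 0).val (σ x1).val (σ x2).val (σ x3).val (σ x4).val (σ x5).val (σ x6).val
      ⟨⟨p13, p14⟩, ⟨p23, p24⟩, ⟨p33, p34⟩, ⟨p43, p44⟩, ⟨p53, p54⟩, ⟨p63, p64⟩⟩
      ⟨e12, e13, e14, e15, e16, e23, e24, e25, e26, e34, e35, e36, e45, e46, e56⟩
    omega
  -- refined bounds
  have q12 : x1.val ≤ 6 := by omega
  have q22 : x2.val ≤ 6 := by omega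
  have q32 : x3.val ≤ 6 := by omega
  have q42 : x4.val ≤ 6 := by omega
  have q52 : x5.val ≤ 6 := by omega
  have q62 : x6.val ≤ 6 := by omega
  have r11 : 8 ≤ (σ x1).val := by omega
  have r21 : 8 ≤ (σ x2).val := by omega
  have r31 : 8 ≤ (σ x3).val := by omega
  have r41 : 8 ≤ (σ x4).val := by omega
  have r51 : 8 ≤ (σ x5).val := by omega
  have r61 : 8 ≤ (σ x6).val := by omega
  -- the fifteen pairwise interlacement equivalences
  have P12 := pair 1 2 (by decide) x1 x2 g1 g2 p11 q12 p21 q22 r11 p14 r21 p24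
  have P13 := pair 1 3 (by decide) x1 x3 g1 g3 p11 q12 p31 q32 r11 p14 r31 p34
  have P14 := pair 1 4 (by decide) x1 x4 g1 g4 p11 q12 p41 q42 r11 p14 r41 p44
  have P23 := pair 2 3 (by decide) x2 x3 g2 g3 p21 q22 p31 q32 r21 p24 r31 p34
  have P24 := pair 2 4 (by decide) x2 x4 g2 g4 p21 q22 p41 q42 r21 p24 r41 p44
  have P25 := pair 2 5 (by decide) x2 x5 g2 g5 p21 q22 p51 q52 r21 p24 r51 p54
  have P34 := pair 3 4 (by decide) x3 x4 g3 g4 p31 q32 p41 q42 r31 p34 r41 p44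
  have P35 := pair 3 5 (by decide) x3 x5 g3 g5 p31 q32 p51 q52 r31 p34 r51 p54
  have P36 := pair 3 6 (by decide) x3 x6 g3 g6 p31 q32 p61 q62 r31 p34 r61 p64
  have P45 := pair 4 5 (by decide) x4 x5 g4 g5 p41 q42 p51 q52 r41 p44 r51 p54
  have P46 := pair 4 6 (by decide) x4 x6 g4 g6 p41 q42 p61 q62 r41 p44 r61 p64
  have P56 := pair 5 6 (by decide) x5 x6 g5 g6 p51 q52 p61 q62 r51 p54 r61 p64
  have P61 := pair 6 1 (by decide) x6 x1 g6 g1 p61 q62 p11 q12 r61 p64 r11 p14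
  have P51 := pair 5 1 (by decide) x5 x1 g5 g1 p51 q52 p11 q12 r51 p54 r11 p14
  have P62 := pair 6 2 (by decide) x6 x2 g6 g2 p61 q62 p21 q22 r61 p64 r21 p24
  exact endgame x1.val x2.val x3.val x4.val x5.val x6.val
    (σ x1).val (σ x2).val (σ x3).val (σ x4).val (σ x5).val (σ x6).val
    d12 d13 d14 d15 d16 d23 d24 d25 d26 d34 d35 d36 d45 d46 d56
    e12 e13 e14 e15 e16 e23 e24 e25 e26 e34 e35 e36 e45 e46 e56
    (P12.mp (by decide)) (P23.mp (by decide)) (P34.mp (by decide))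
    (P45.mp (by decide)) (P56.mp (by decide)) (P61.mp (by decide))
    (fun h => (by decide : ¬ W6Adj 1 3) (P13.mpr h))
    (fun h => (by decide : ¬ W6Adj 2 4) (P24.mpr h))
    (fun h => (by decide : ¬ W6Adj 3 5) (P35.mpr h))
    (fun h => (by decide : ¬ W6Adj 4 6) (P46.mpr h))
    (fun h => (by decide : ¬ W6Adj 5 1) (P51.mpr h))
    (fun h => (by decide : ¬ W6Adj 6 2) (P62.mpr h))
    (fun h => (by decide : ¬ W6Adj 1 4) (P14.mpr h))
    (fun h => (by decide : ¬ W6Adj 2 5) (P25.mpr h))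
    (fun h => (by decide : ¬ W6Adj 3 6) (P36.mpr h))

theorem stmt14 :
    ¬ ∃ (σ : ZMod 14 → ZMod 14) (f : Fin 7 → ZMod 14),
      (∀ k, σ (σ k) = k) ∧ (∀ k, σ k ≠ k) ∧
      (∀ i j : Fin 7, i ≠ j → f i ≠ f j ∧ f i ≠ σ (f j)) ∧
      (∀ i j : Fin 7, i ≠ j →
        (W6Adj i j ↔ LinkedChords 14 σ (f i) (f j))) := by
  rintro ⟨σ, f, hinv, hfp, hd, hiff⟩
  set c := f 0 with hc
  have rotIns : ∀ x y : ZMod 14,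
      InsideArc 14 (fun z => σ (z + c) - c) (x - c) (y - c) ↔ InsideArc 14 σ x y := by
    intro x y
    unfold InsideArc
    simp only [ne_eq, sub_add_cancel, sub_sub_sub_cancel_right, sub_left_inj]
  refine main_aux (fun x => σ (x + c) - c) (fun i => f i - c) ?_ ?_ ?_ ?_ ?_
  · intro k
    simp only [sub_add_cancel, hinv, add_sub_cancel_right]
  · intro k h
    exact hfp (k + c) (by rwa [sub_eq_iff_eq_add] at h)
  · intro i j hij
    constructor
    · exact fun h => (hd i j hij).1 (by rwa [sub_left_inj] at h)
    · simp only [sub_add_cancel]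
      exact fun h => (hd i j hij).2 (by rwa [sub_left_inj] at h)
  · intro i j hij
    rw [hiff i j hij]
    unfold LinkedChords
    simp only [sub_add_cancel]
    rw [rotIns (f i) (f j), rotIns (f i) (σ (f j))]
  · simp [hc]
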